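/- Let φ_j : [0,1] → [0,1], for j = 1,…,d, be Lipschitz, monotone increasing bijections, and let φ(s) := (φ_1(s_1),…,φ_d(s_d)) : [0,1]^d → [0,1]^d. Then for every x ∈ Lip(□^d, ℝ^n), every m ≥ 1, and every level-m index (P,π) ∈ O_{d,n}^m × Σ_m^d: Φ_m^{P,π}(x ∘ φ) = Φ_m^{P,π}(x). (Note x ∘ φ ∈ Lip(□^d, ℝ^n).) -/

import Mathlib

open MeasureTheory

open scoped Classical

noncomputable section

/-- The unit cube `[0,1]^d` as a subset of `Fin d → ℝ`. -/
def unitCube (d : ℕ) : Set (Fin d → ℝ) := Set.Icc 0 1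

/-- Lipschitz condition with constant `L`, with respect to Euclidean norms. -/
def EuclidLip {d n : ℕ} (L : ℝ) (x : (Fin d → ℝ) → Fin n → ℝ) : Prop :=
  ∀ s t : Fin d → ℝ,
    Real.sqrt (∑ k, (x s k - x t k) ^ 2) ≤ L * Real.sqrt (∑ j, (s j - t j) ^ 2)

/-- Lipschitz map. -/
def IsLipMap {d n : ℕ} (x : (Fin d → ℝ) → Fin n → ℝ) : Prop :=
  ∃ L : ℝ, EuclidLip L x

/-- The Jacobian minor `J[x_P](s)`: the determinant of the `d × d` matrix
with `(i,j)` entry `∂ x_{P i} / ∂ s_j (s)`. -/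
def jacobianMinor {d n : ℕ} (x : (Fin d → ℝ) → Fin n → ℝ) (P : Fin d → Fin n)
    (s : Fin d → ℝ) : ℝ :=
  (Matrix.of fun i j : Fin d => fderiv ℝ (fun t => x t (P i)) s (Pi.single j 1)).det

/-- The permuted `m`-simplex `Δ^m_π(a,b)`. -/
def permSimplex {m : ℕ} (π : Equiv.Perm (Fin m)) (a b : ℝ) : Set (Fin m → ℝ) :=
  {u | (∀ i, u i ∈ Set.Icc a b) ∧ StrictMono fun i => u (π i)}

/-- The integration domain `D^{m,d}_π(a,b) = Δ^m_{π 1}(a₁,b₁) × ⋯ × Δ^m_{π d}(a_d,b_d)`. -/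
def intDomain {m d : ℕ} (π : Fin d → Equiv.Perm (Fin m)) (a b : Fin d → ℝ) :
    Set (Fin m → Fin d → ℝ) :=
  {t | ∀ j, (fun i => t i j) ∈ permSimplex (π j) (a j) (b j)}

/-- The restricted mapping space monomial `Φ_m^{P,π}(x)_{a,b}`. -/
def msMonomialOn {d n m : ℕ} (x : (Fin d → ℝ) → Fin n → ℝ)
    (P : Fin m → Fin d → Fin n) (π : Fin d → Equiv.Perm (Fin m))
    (a b : Fin d → ℝ) : ℝ :=
  ∫ t in intDomain π a b, ∏ i, jacobianMinor x (P i) (t i)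

/-- The mapping space monomial `Φ_m^{P,π}(x)`. -/
def msMonomial {d n m : ℕ} (x : (Fin d → ℝ) → Fin n → ℝ)
    (P : Fin m → Fin d → Fin n) (π : Fin d → Equiv.Perm (Fin m)) : ℝ :=
  msMonomialOn x P π (fun _ => 0) (fun _ => 1)

/-! ### Auxiliary lemmas for the proof of `stmt10` -/

namespace Stmt10Aux

open scoped ENNReal

/-- diagonal continuous linear map on a nested pi type -/
def diagCLM {m d : ℕ} (c : Fin m → Fin d → ℝ) :
    (Fin m → Fin d → ℝ) →L[ℝ] (Fin m → Fin d → ℝ) :=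
  ContinuousLinearMap.pi fun i => ContinuousLinearMap.pi fun j =>
    c i j • (((ContinuousLinearMap.proj j : (Fin d → ℝ) →L[ℝ] ℝ)).comp
      (ContinuousLinearMap.proj i : (Fin m → Fin d → ℝ) →L[ℝ] (Fin d → ℝ)))

@[simp] lemma diagCLM_apply {m d : ℕ} (c : Fin m → Fin d → ℝ)
    (v : Fin m → Fin d → ℝ) (i : Fin m) (j : Fin d) :
    diagCLM c v i j = c i j * v i j := rfl

lemma det_diagCLM {m d : ℕ} (c : Fin m → Fin d → ℝ) :
    (diagCLM c).det = ∏ i, ∏ j, c i j := by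
  classical
  let b : Module.Basis ((_ : Fin m) × Fin d) ℝ (Fin m → Fin d → ℝ) :=
    Pi.basis fun _ : Fin m => Pi.basisFun ℝ (Fin d)
  have hM : LinearMap.toMatrix b b (diagCLM c : (Fin m → Fin d → ℝ) →ₗ[ℝ] _)
      = Matrix.diagonal (fun p : (_ : Fin m) × Fin d => c p.1 p.2) := by
    ext p q
    rw [LinearMap.toMatrix_apply]
    have hbq : b q = Pi.single q.1 (Pi.single q.2 1) := by
      rw [show b q = Pi.single q.1 ((Pi.basisFun ℝ (Fin d)) q.2) from Pi.basis_apply _ q,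
        Pi.basisFun_apply]
    have hrepr : ∀ (v : Fin m → Fin d → ℝ), b.repr v p = v p.1 p.2 := by
      intro v
      rw [Pi.basis_repr, Pi.basisFun_repr]
    rw [hbq, hrepr]
    rcases p with ⟨pi, pj⟩; rcases q with ⟨qi, qj⟩
    simp only [ContinuousLinearMap.coe_coe, diagCLM_apply, Matrix.diagonal_apply]
    by_cases h1 : pi = qi
    · subst h1
      by_cases h2 : pj = qj
      · subst h2; simp
      · simp [Pi.single_apply, h2, Sigma.ext_iff]
    · simp [Pi.single_apply, h1, Sigma.ext_iff]
  have : (diagCLM c).det = LinearMap.det (diagCLM c : (Fin m → Fin d → ℝ) →ₗ[ℝ] _) := rfl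
  rw [this, ← LinearMap.det_toMatrix b, hM, Matrix.det_diagonal]
  rw [← Finset.univ_sigma_univ, Finset.prod_sigma]

/-- preimage of a null set under a coordinate evaluation is null (one level). -/
lemma eval_preimage_null {k : ℕ} {α : Type*} [MeasureTheory.MeasureSpace α]
    [SigmaFinite (volume : Measure α)]
    {A : Set α} (hA : volume A = 0) (i : Fin k) :
    volume {u : Fin k → α | u i ∈ A} = 0 := by
  have : {u : Fin k → α | u i ∈ A} = Function.eval i ⁻¹' A := rfl
  rw [this, MeasureTheory.volume_pi]
  exact MeasureTheory.Measure.pi_eval_preimage_null (fun _ => volume) hA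

/-- nested version -/
lemma eval2_preimage_null {m d : ℕ} {A : Set ℝ} (hA : volume A = 0)
    (i : Fin m) (j : Fin d) :
    volume {u : Fin m → Fin d → ℝ | u i j ∈ A} = 0 := by
  have h1 : volume {v : Fin d → ℝ | v j ∈ A} = 0 := eval_preimage_null hA j
  exact eval_preimage_null (A := {v : Fin d → ℝ | v j ∈ A}) h1 i

/-- image of a null set under a Lipschitz map `ℝ → ℝ` is null -/
lemma lipschitz_image_null {K : NNReal} {ψ : ℝ → ℝ} (hψ : LipschitzWith K ψ)
    {Z : Set ℝ} (hZ : volume Z = 0) : volume (ψ '' Z) = 0 := by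
  have h := hψ.hausdorffMeasure_image_le (zero_le_one (α := ℝ)) Z
  rw [MeasureTheory.hausdorffMeasure_real] at h
  refine le_antisymm ?_ zero_le
  calc volume (ψ '' Z) ≤ (K : ℝ≥0∞) ^ (1:ℝ) * volume Z := h
    _ = 0 := by rw [hZ, mul_zero]

/-- Lipschitz coordinates from a Euclidean Lipschitz bound. -/
lemma coord_lipschitz {d n : ℕ} {L : ℝ} {x : (Fin d → ℝ) → Fin n → ℝ}
    (hx : ∀ s t : Fin d → ℝ,
      Real.sqrt (∑ k, (x s k - x t k) ^ 2) ≤ L * Real.sqrt (∑ j, (s j - t j) ^ 2))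
    (k : Fin n) :
    LipschitzWith (Real.toNNReal (L * Real.sqrt d)) (fun s => x s k) := by
  apply LipschitzWith.of_dist_le_mul
  intro s t
  have h1 : dist (x s k) (x t k) ≤ Real.sqrt (∑ k', (x s k' - x t k') ^ 2) := by
    rw [Real.dist_eq]
    rw [← Real.sqrt_sq_eq_abs]
    apply Real.sqrt_le_sqrt
    exact Finset.single_le_sum (f := fun k' => (x s k' - x t k') ^ 2)
      (fun k' _ => sq_nonneg _) (Finset.mem_univ k)
  have h2 : Real.sqrt (∑ j, (s j - t j) ^ 2) ≤ Real.sqrt d * dist s t := by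
    have hb : ∑ j, (s j - t j) ^ 2 ≤ (d : ℝ) * dist s t ^ 2 := by
      calc ∑ j, (s j - t j) ^ 2 ≤ ∑ _j : Fin d, dist s t ^ 2 := by
            apply Finset.sum_le_sum
            intro j _
            have : |s j - t j| ≤ dist s t := by
              rw [← Real.dist_eq]
              exact dist_le_pi_dist s t j
            calc (s j - t j) ^ 2 = |s j - t j| ^ 2 := (sq_abs _).symm
              _ ≤ dist s t ^ 2 := by
                  apply pow_le_pow_left₀ (abs_nonneg _) this
        _ = (d : ℝ) * dist s t ^ 2 := by simp [Finset.sum_const, mul_comm]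
    calc Real.sqrt (∑ j, (s j - t j) ^ 2) ≤ Real.sqrt ((d : ℝ) * dist s t ^ 2) :=
          Real.sqrt_le_sqrt hb
      _ = Real.sqrt d * dist s t := by
          rw [Real.sqrt_mul (Nat.cast_nonneg d), Real.sqrt_sq dist_nonneg]
  rcases le_or_gt 0 L with hL | hL
  · calc dist (x s k) (x t k) ≤ L * Real.sqrt (∑ j, (s j - t j) ^ 2) :=
          h1.trans (hx s t)
      _ ≤ L * (Real.sqrt d * dist s t) := by
          apply mul_le_mul_of_nonneg_left h2 hL
      _ = L * Real.sqrt d * dist s t := by ring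
      _ ≤ (Real.toNNReal (L * Real.sqrt d) : ℝ) * dist s t := by
          apply mul_le_mul_of_nonneg_right (Real.le_coe_toNNReal _) dist_nonneg
  · have h0 : dist (x s k) (x t k) ≤ 0 := by
      refine (h1.trans (hx s t)).trans ?_
      apply mul_nonpos_of_nonpos_of_nonneg hL.le (Real.sqrt_nonneg _)
    calc dist (x s k) (x t k) ≤ 0 := h0
      _ ≤ _ := by positivity

/-- Directional derivative in direction `j` of `x ∘ ψrow` vanishes where `ψ j` has
zero derivative. -/
lemma col_entry_zero {d n : ℕ} {C : NNReal} {x : (Fin d → ℝ) → Fin n → ℝ}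
    (hx : ∀ k, LipschitzWith C (fun s => x s k))
    {ψ : Fin d → ℝ → ℝ} {v : Fin d → ℝ} {j : Fin d}
    (hψj : HasDerivAt (ψ j) 0 (v j)) (k : Fin n)
    (hy : DifferentiableAt ℝ (fun s : Fin d → ℝ => x (fun j' => ψ j' (s j')) k) v) :
    fderiv ℝ (fun s : Fin d → ℝ => x (fun j' => ψ j' (s j')) k) v (Pi.single j 1) = 0 := by
  classical
  set yk : (Fin d → ℝ) → ℝ := fun s => x (fun j' => ψ j' (s j')) k with hyk
  set D := fderiv ℝ yk v with hD
  have hfd : HasFDerivAt yk D v := hy.hasFDerivAt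
  set w : Fin d → ℝ := Pi.single j 1 with hw
  have hline : HasDerivAt (fun t : ℝ => v + t • w) w 0 := by
    have h1 : HasDerivAt (fun t : ℝ => t • w) ((1:ℝ) • w) 0 :=
      (hasDerivAt_id (0:ℝ)).smul_const w
    rw [one_smul] at h1
    exact h1.const_add v
  have hcomp : HasDerivAt (fun t : ℝ => yk (v + t • w)) (D w) 0 := by
    have h0 : HasFDerivAt yk D ((fun t : ℝ => v + t • w) 0) := by simpa using hfd
    exact h0.comp_hasDerivAt 0 hline
  have hzero : HasDerivAt (fun t : ℝ => yk (v + t • w)) 0 0 := by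
    rw [hasDerivAt_iff_isLittleO]
    simp only [zero_add, smul_zero, sub_zero, zero_smul]
    have hbound : ∀ t : ℝ, ‖yk (v + t • w) - yk (v + (0:ℝ) • w)‖ ≤
        (C : ℝ) * ‖ψ j (v j + t) - ψ j (v j)‖ := by
      intro t
      have hdist : dist (fun j' => ψ j' ((v + t • w) j')) (fun j' => ψ j' (v j')) ≤
          |ψ j (v j + t) - ψ j (v j)| := by
        apply dist_pi_le_iff (abs_nonneg _) |>.2
        intro j'
        by_cases hj' : j' = j
        · subst hj'
          have : (v + t • w) j' = v j' + t := by
            simp [hw, Pi.single_apply]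
          rw [this, Real.dist_eq]
        · have : (v + t • w) j' = v j' := by
            simp [hw, Pi.single_apply, hj']
          rw [this]
          simp [abs_nonneg]
      have := (hx k).dist_le_mul (fun j' => ψ j' ((v + t • w) j')) (fun j' => ψ j' (v j'))
      calc ‖yk (v + t • w) - yk (v + (0:ℝ) • w)‖
          = dist (x (fun j' => ψ j' ((v + t • w) j')) k) (x (fun j' => ψ j' (v j')) k) := by
            simp [hyk, Real.dist_eq, Real.norm_eq_abs]
        _ ≤ (C:ℝ) * dist (fun j' => ψ j' ((v + t • w) j')) (fun j' => ψ j' (v j')) := this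
        _ ≤ (C:ℝ) * |ψ j (v j + t) - ψ j (v j)| :=
            mul_le_mul_of_nonneg_left hdist C.coe_nonneg
    have hlittle : (fun t : ℝ => ψ j (v j + t) - ψ j (v j)) =o[nhds 0] (fun t : ℝ => t) := by
      have h := hψj
      rw [hasDerivAt_iff_isLittleO] at h
      simp only [smul_zero, sub_zero] at h
      have htend : Filter.Tendsto (fun t : ℝ => v j + t) (nhds 0) (nhds (v j)) := by
        have : Filter.Tendsto (fun t : ℝ => v j + t) (nhds 0) (nhds (v j + 0)) :=
          Filter.Tendsto.const_add _ Filter.tendsto_id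
        simpa using this
      have hcomp2 := h.comp_tendsto htend
      simpa [Function.comp_def] using hcomp2
    have hbig : (fun t : ℝ => yk (v + t • w) - yk (v + (0:ℝ) • w)) =O[nhds 0]
        (fun t : ℝ => ψ j (v j + t) - ψ j (v j)) :=
      Asymptotics.IsBigO.of_bound _ (Filter.Eventually.of_forall fun t =>
        (hbound t).trans (le_of_eq (by rw [Real.norm_eq_abs])))
    have := hbig.trans_isLittleO hlittle
    simpa using this
  have := hcomp.unique hzero
  rw [hw] at this
  exact this

/-- the row diagonal CLM -/
def rowCLM {d : ℕ} (c : Fin d → ℝ) : (Fin d → ℝ) →L[ℝ] (Fin d → ℝ) :=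
  ContinuousLinearMap.pi fun j => c j • (ContinuousLinearMap.proj j :
    (Fin d → ℝ) →L[ℝ] ℝ)

lemma rowCLM_single {d : ℕ} (c : Fin d → ℝ) (j : Fin d) :
    rowCLM c (Pi.single j 1) = c j • (Pi.single j (1:ℝ) : Fin d → ℝ) := by
  funext j'
  simp only [rowCLM, ContinuousLinearMap.pi_apply, ContinuousLinearMap.smul_apply,
    ContinuousLinearMap.proj_apply, Pi.smul_apply, smul_eq_mul]
  by_cases h : j' = j
  · subst h; simp
  · simp [Pi.single_apply, h]

lemma hasFDerivAt_row {d : ℕ} {ψ : Fin d → ℝ → ℝ} {c : Fin d → ℝ} {v : Fin d → ℝ}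
    (hψ : ∀ j, HasDerivAt (ψ j) (c j) (v j)) :
    HasFDerivAt (fun s : Fin d → ℝ => fun j => ψ j (s j)) (rowCLM c) v := by
  apply hasFDerivAt_pi.2
  intro j
  have hproj : HasFDerivAt (fun s : Fin d → ℝ => s j)
      (ContinuousLinearMap.proj j : (Fin d → ℝ) →L[ℝ] ℝ) v := hasFDerivAt_apply j v
  exact (hψ j).comp_hasFDerivAt v hproj

/-- chain rule for the Jacobian minor -/
lemma minor_chain {d n : ℕ} {x : (Fin d → ℝ) → Fin n → ℝ}
    {ψ : Fin d → ℝ → ℝ} {c : Fin d → ℝ} {v : Fin d → ℝ}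
    (hψ : ∀ j, HasDerivAt (ψ j) (c j) (v j))
    (hxd : ∀ k : Fin n, DifferentiableAt ℝ (fun s => x s k) (fun j => ψ j (v j)))
    (Q : Fin d → Fin n) :
    jacobianMinor (fun s => x (fun j => ψ j (s j))) Q v
      = (∏ j, c j) * jacobianMinor x Q (fun j => ψ j (v j)) := by
  classical
  set w : Fin d → ℝ := fun j => ψ j (v j) with hwdef
  have hrow := hasFDerivAt_row hψ
  have hentry : ∀ (k : Fin n) (j : Fin d),
      fderiv ℝ (fun s : Fin d → ℝ => x (fun j' => ψ j' (s j')) k) v (Pi.single j 1)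
        = c j * fderiv ℝ (fun s => x s k) w (Pi.single j 1) := by
    intro k j
    have hcomp : HasFDerivAt (fun s : Fin d → ℝ => x (fun j' => ψ j' (s j')) k)
        (((fderiv ℝ (fun s => x s k) w)).comp (rowCLM c)) v :=
      (((hxd k).hasFDerivAt).comp v hrow :)
    rw [hcomp.fderiv]
    simp only [ContinuousLinearMap.coe_comp', Function.comp_apply]
    rw [rowCLM_single, ContinuousLinearMap.map_smul]
    simp
  unfold jacobianMinor
  have : (Matrix.of fun k j : Fin d =>
      fderiv ℝ (fun t => (fun s => x (fun j' => ψ j' (s j'))) t (Q k)) v (Pi.single j 1))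
      = Matrix.of fun k j : Fin d =>
        c j * (Matrix.of fun k j : Fin d =>
          fderiv ℝ (fun t => x t (Q k)) w (Pi.single j 1)) k j := by
    ext k j
    exact hentry (Q k) j
  rw [this]
  exact Matrix.det_mul_row c _

/-- vanishing of the Jacobian minor when some coordinate reparametrization has
zero derivative -/
lemma minor_vanish {d n : ℕ} {C : NNReal} {x : (Fin d → ℝ) → Fin n → ℝ}
    (hx : ∀ k, LipschitzWith C (fun s => x s k))
    {ψ : Fin d → ℝ → ℝ} {v : Fin d → ℝ} {j : Fin d}
    (hψj : HasDerivAt (ψ j) 0 (v j)) (Q : Fin d → Fin n) :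
    jacobianMinor (fun s => x (fun j' => ψ j' (s j'))) Q v = 0 := by
  classical
  by_cases hall : ∀ k : Fin d,
      DifferentiableAt ℝ (fun s : Fin d → ℝ => x (fun j' => ψ j' (s j')) (Q k)) v
  · apply Matrix.det_eq_zero_of_column_eq_zero j
    intro k
    exact col_entry_zero hx hψj (Q k) (hall k)
  · push_neg at hall
    obtain ⟨k, hk⟩ := hall
    apply Matrix.det_eq_zero_of_row_eq_zero k
    intro j'
    simp only [Matrix.of_apply]
    rw [fderiv_zero_of_not_differentiableAt hk]
    rfl

/-- nonnegativity of the derivative of a function strictly monotone near the point -/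
lemma deriv_nonneg_aux {ψ φ : ℝ → ℝ} (heq : Set.EqOn ψ φ (Set.Icc 0 1))
    (hm : StrictMonoOn φ (Set.Icc 0 1)) {r c : ℝ} (hr : r ∈ Set.Ioo (0:ℝ) 1)
    (hc : HasDerivAt ψ c r) : 0 ≤ c := by
  have hslope := hasDerivAt_iff_tendsto_slope.1 hc
  have hsub : nhdsWithin r (Set.Ioi r) ≤ nhdsWithin r ({r}ᶜ) := by
    apply nhdsWithin_mono
    intro t ht
    exact ne_of_gt ht
  have h2 : Filter.Tendsto (slope ψ r) (nhdsWithin r (Set.Ioi r)) (nhds c) :=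
    hslope.mono_left hsub
  apply ge_of_tendsto h2
  filter_upwards [Ioo_mem_nhdsGT_of_mem ⟨le_refl r, hr.2⟩] with t ht
  have hrIcc : r ∈ Set.Icc (0:ℝ) 1 := ⟨hr.1.le, hr.2.le⟩
  have htIcc : t ∈ Set.Icc (0:ℝ) 1 := ⟨hr.1.le.trans ht.1.le, ht.2.le⟩
  rw [slope_def_field]
  have hlt : ψ r < ψ t := by
    rw [heq hrIcc, heq htIcc]
    exact hm hrIcc htIcc ht.1
  have hden : 0 < t - r := sub_pos.2 ht.1
  have hnum : 0 ≤ ψ t - ψ r := sub_nonneg.2 hlt.le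
  positivity

/-- congruence for the Jacobian minor for reparametrizations that agree on the cube -/
lemma minor_congr {d n : ℕ} (x : (Fin d → ℝ) → Fin n → ℝ) {φ ψ : Fin d → ℝ → ℝ}
    (h : ∀ j, Set.EqOn (φ j) (ψ j) (Set.Icc 0 1))
    {v : Fin d → ℝ} (hv : ∀ j, v j ∈ Set.Ioo (0:ℝ) 1) (Q : Fin d → Fin n) :
    jacobianMinor (fun s => x (fun j => φ j (s j))) Q v
      = jacobianMinor (fun s => x (fun j => ψ j (s j))) Q v := by
  unfold jacobianMinor
  congr 1
  ext k j
  simp only [Matrix.of_apply]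
  have hmem : {s : Fin d → ℝ | ∀ j', s j' ∈ Set.Ioo (0:ℝ) 1} ∈ nhds v := by
    have hopen : IsOpen {s : Fin d → ℝ | ∀ j', s j' ∈ Set.Ioo (0:ℝ) 1} := by
      have : {s : Fin d → ℝ | ∀ j', s j' ∈ Set.Ioo (0:ℝ) 1}
          = Set.pi Set.univ (fun _ => Set.Ioo (0:ℝ) 1) := by
        ext s; simp [Set.mem_pi]
      rw [this]
      exact isOpen_set_pi Set.finite_univ (fun _ _ => isOpen_Ioo)
    exact hopen.mem_nhds hv
  have heq : (fun t : Fin d → ℝ => x (fun j' => φ j' (t j')) (Q k))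
      =ᶠ[nhds v] (fun t : Fin d → ℝ => x (fun j' => ψ j' (t j')) (Q k)) := by
    apply Filter.eventuallyEq_of_mem hmem
    intro s hs
    have : (fun j' => φ j' (s j')) = fun j' => ψ j' (s j') := by
      funext j'
      exact h j' ⟨(hs j').1.le, (hs j').2.le⟩
    simp only
    rw [this]
  rw [heq.fderiv_eq]

/-- measurability of the permuted simplex -/
lemma measurableSet_permSimplex {m : ℕ} (π : Equiv.Perm (Fin m)) (a b : ℝ) :
    MeasurableSet (permSimplex π a b) := by
  classical
  have : permSimplex π a b = (⋂ i, {u : Fin m → ℝ | u i ∈ Set.Icc a b}) ∩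
      ⋂ p, ⋂ q, {u : Fin m → ℝ | p < q → u (π p) < u (π q)} := by
    ext u
    simp only [permSimplex, Set.mem_setOf_eq, Set.mem_inter_iff, Set.mem_iInter]
    constructor
    · rintro ⟨h1, h2⟩
      exact ⟨h1, fun p q h => h2 h⟩
    · rintro ⟨h1, h2⟩
      exact ⟨h1, fun p q h => h2 p q h⟩
  rw [this]
  apply MeasurableSet.inter
  · exact MeasurableSet.iInter fun i => measurable_pi_apply i measurableSet_Icc
  · refine MeasurableSet.iInter fun p => MeasurableSet.iInter fun q => ?_
    by_cases h : p < q
    · have : {u : Fin m → ℝ | p < q → u (π p) < u (π q)}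
          = {u : Fin m → ℝ | u (π p) < u (π q)} := by
        ext u; simp [h]
      rw [this]
      exact measurableSet_lt (measurable_pi_apply _) (measurable_pi_apply _)
    · have : {u : Fin m → ℝ | p < q → u (π p) < u (π q)} = Set.univ := by
        ext u; simp [h]
      rw [this]
      exact MeasurableSet.univ

/-- measurability of the integration domain -/
lemma measurableSet_intDomain {m d : ℕ} (π : Fin d → Equiv.Perm (Fin m))
    (a b : Fin d → ℝ) : MeasurableSet (intDomain π a b) := by
  have : intDomain π a b = ⋂ j, (fun t : Fin m → Fin d → ℝ => fun i => t i j) ⁻¹'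
      permSimplex (π j) (a j) (b j) := by
    ext t; simp only [intDomain, Set.mem_iInter, Set.mem_setOf_eq, Set.mem_preimage]
  rw [this]
  refine MeasurableSet.iInter fun j => ?_
  have hmeas : Measurable (fun t : Fin m → Fin d → ℝ => fun i => t i j) :=
    measurable_pi_lambda _ fun i => (measurable_pi_apply j).comp (measurable_pi_apply i)
  exact hmeas (measurableSet_permSimplex _ _ _)

end Stmt10Aux

/-- invariance under coordinate-wise reparametrization. -/
theorem stmt10 (d n m : ℕ) (hd : 1 ≤ d) (hn : d ≤ n) (hm : 1 ≤ m)
    (x : (Fin d → ℝ) → Fin n → ℝ) (hx : IsLipMap x)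
    (φ : Fin d → ℝ → ℝ)
    (hφlip : ∀ j, ∃ K : NNReal, LipschitzOnWith K (φ j) (Set.Icc 0 1))
    (hφmono : ∀ j, StrictMonoOn (φ j) (Set.Icc 0 1))
    (hφbij : ∀ j, Set.BijOn (φ j) (Set.Icc 0 1) (Set.Icc 0 1))
    (P : Fin m → Fin d → Fin n) (hP : ∀ i, StrictMono (P i))
    (π : Fin d → Equiv.Perm (Fin m)) :
    msMonomial (fun s => x (fun j => φ j (s j))) P π = msMonomial x P π := by
  classical
  open Stmt10Aux in
  obtain ⟨L, hLE⟩ := hx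
  have hL : ∀ s t : Fin d → ℝ, Real.sqrt (∑ k, (x s k - x t k) ^ 2) ≤
      L * Real.sqrt (∑ j, (s j - t j) ^ 2) := hLE
  have hxk : ∀ k, LipschitzWith (Real.toNNReal (L * Real.sqrt d)) (fun s => x s k) :=
    fun k => Stmt10Aux.coord_lipschitz hL k
  choose K hK using hφlip
  choose ψ hψlip hψeq using fun j => LipschitzOnWith.extend_real (hK j)
  -- hψeq j : Set.EqOn (φ j) (ψ j) (Set.Icc 0 1)
  set S : Set (Fin m → Fin d → ℝ) := intDomain π (fun _ => 0) (fun _ => 1) with hSdef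
  set Ψ : (Fin m → Fin d → ℝ) → (Fin m → Fin d → ℝ) := fun u i j => ψ j (u i j) with hΨdef
  set y : (Fin d → ℝ) → Fin n → ℝ := fun s => x (fun j => ψ j (s j)) with hydef
  set g : (Fin m → Fin d → ℝ) → ℝ := fun t => ∏ i, jacobianMinor x (P i) (t i) with hgdef
  set gy : (Fin m → Fin d → ℝ) → ℝ := fun t => ∏ i, jacobianMinor y (P i) (t i) with hgydef
  set cf : (Fin m → Fin d → ℝ) → Fin m → Fin d → ℝ :=
    fun u i j => deriv (ψ j) (u i j) with hcfdef
  -- basic facts about S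
  have hSicc : ∀ u ∈ S, ∀ i j, u i j ∈ Set.Icc (0:ℝ) 1 := fun u hu i j => (hu j).1 i
  have hSsm : ∀ u ∈ S, ∀ j, StrictMono fun i => u (π j i) j := fun u hu j => (hu j).2
  have hSmeas : MeasurableSet S := Stmt10Aux.measurableSet_intDomain π _ _
  -- null sets
  have hbd : volume {u : Fin m → Fin d → ℝ | ∃ i j, u i j = 0 ∨ u i j = 1} = 0 := by
    apply measure_mono_null (t := ⋃ i, ⋃ j,
      ({u : Fin m → Fin d → ℝ | u i j = 0} ∪ {u : Fin m → Fin d → ℝ | u i j = 1}))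
    · rintro u ⟨i, j, h⟩
      refine Set.mem_iUnion.2 ⟨i, Set.mem_iUnion.2 ⟨j, ?_⟩⟩
      rcases h with h | h
      · exact Or.inl h
      · exact Or.inr h
    · refine measure_iUnion_null fun i => measure_iUnion_null fun j => measure_union_null ?_ ?_
      · exact Stmt10Aux.eval2_preimage_null (A := {(0:ℝ)}) Real.volume_singleton i j
      · exact Stmt10Aux.eval2_preimage_null (A := {(1:ℝ)}) Real.volume_singleton i j
  have hZ : ∀ j, volume {r : ℝ | ¬ DifferentiableAt ℝ (ψ j) r} = 0 := by
    intro j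
    have := (hψlip j).ae_differentiableAt (μ := volume)
    rwa [MeasureTheory.ae_iff] at this
  have hnd : volume {u : Fin m → Fin d → ℝ |
      ∃ i j, ¬ DifferentiableAt ℝ (ψ j) (u i j)} = 0 := by
    apply measure_mono_null (t := ⋃ i, ⋃ j,
      {u : Fin m → Fin d → ℝ | u i j ∈ {r : ℝ | ¬ DifferentiableAt ℝ (ψ j) r}})
    · rintro u ⟨i, j, h⟩
      exact Set.mem_iUnion.2 ⟨i, Set.mem_iUnion.2 ⟨j, h⟩⟩
    · exact measure_iUnion_null fun i => measure_iUnion_null fun j =>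
        Stmt10Aux.eval2_preimage_null (hZ j) i j
  -- the good full-measure subset of S
  set s₁ : Set (Fin m → Fin d → ℝ) := S ∩ {u | ∀ i j, u i j ∈ Set.Ioo (0:ℝ) 1 ∧
    DifferentiableAt ℝ (ψ j) (u i j)} with hs₁def
  have hs₁meas : MeasurableSet s₁ := by
    apply hSmeas.inter
    have : {u : Fin m → Fin d → ℝ | ∀ i j, u i j ∈ Set.Ioo (0:ℝ) 1 ∧
        DifferentiableAt ℝ (ψ j) (u i j)} = ⋂ i, ⋂ j,
        {u : Fin m → Fin d → ℝ | u i j ∈ Set.Ioo (0:ℝ) 1 ∩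
          {r | DifferentiableAt ℝ (ψ j) r}} := by
      ext u
      simp only [Set.mem_setOf_eq, Set.mem_iInter, Set.mem_inter_iff, Set.mem_Ioo]
    rw [this]
    refine MeasurableSet.iInter fun i => MeasurableSet.iInter fun j => ?_
    have hmeas : Measurable fun u : Fin m → Fin d → ℝ => u i j :=
      (measurable_pi_apply j).comp (measurable_pi_apply i)
    exact hmeas (measurableSet_Ioo.inter (measurableSet_of_differentiableAt ℝ (ψ j)))
  have hs₁S : s₁ ⊆ S := Set.inter_subset_left
  have hSs₁ : volume (S \ s₁) = 0 := by
    apply measure_mono_null (t := {u : Fin m → Fin d → ℝ | ∃ i j, u i j = 0 ∨ u i j = 1}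
      ∪ {u : Fin m → Fin d → ℝ | ∃ i j, ¬ DifferentiableAt ℝ (ψ j) (u i j)})
    · rintro u ⟨huS, hun⟩
      have : ¬ ∀ i j, u i j ∈ Set.Ioo (0:ℝ) 1 ∧ DifferentiableAt ℝ (ψ j) (u i j) :=
        fun h => hun ⟨huS, h⟩
      push_neg at this
      obtain ⟨i, j, hij⟩ := this
      by_cases hIoo : u i j ∈ Set.Ioo (0:ℝ) 1
      · exact Or.inr ⟨i, j, hij hIoo⟩
      · left
        refine ⟨i, j, ?_⟩
        have hicc := hSicc u huS i j
        rcases eq_or_lt_of_le hicc.1 with h0 | h0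
        · exact Or.inl h0.symm
        · rcases eq_or_lt_of_le hicc.2 with h1 | h1
          · exact Or.inr h1
          · exact absurd ⟨h0, h1⟩ hIoo
    · exact measure_union_null hbd hnd
  have hs₁ae : s₁ =ᵐ[volume] S := by
    rw [MeasureTheory.ae_eq_set]
    constructor
    · rw [Set.diff_eq_empty.2 hs₁S]
      exact measure_empty
    · exact hSs₁
  -- properties of Ψ
  have hΨφ : ∀ u ∈ S, ∀ (i : Fin m) (j : Fin d), Ψ u i j = φ j (u i j) :=
    fun u hu i j => (hψeq j (hSicc u hu i j)).symm
  have hmaps : Set.MapsTo Ψ S S := by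
    intro u hu j
    constructor
    · intro i
      show Ψ u i j ∈ Set.Icc (0:ℝ) 1
      rw [hΨφ u hu i j]
      exact (hφbij j).mapsTo (hSicc u hu i j)
    · intro p q hpq
      have h1 := hΨφ u hu (π j p) j
      have h2 := hΨφ u hu (π j q) j
      simp only
      rw [h1, h2]
      exact hφmono j (hSicc u hu _ j) (hSicc u hu _ j) (hSsm u hu j hpq)
  have hinj : Set.InjOn Ψ S := by
    intro u hu v hv h
    funext i j
    have h1 : φ j (u i j) = φ j (v i j) := by
      rw [← hΨφ u hu i j, ← hΨφ v hv i j, h]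
    exact (hφbij j).injOn (hSicc u hu i j) (hSicc v hv i j) h1
  have hsurj : ∀ t ∈ S, ∃ u ∈ S, Ψ u = t := by
    intro t ht
    have hex : ∀ (i : Fin m) (j : Fin d), ∃ r ∈ Set.Icc (0:ℝ) 1, φ j r = t i j :=
      fun i j => (hφbij j).surjOn (hSicc t ht i j)
    choose u hu1 hu2 using hex
    have huS : u ∈ S := by
      intro j
      constructor
      · exact fun i => hu1 i j
      · intro p q hpq
        have hlt : φ j (u (π j p) j) < φ j (u (π j q) j) := by
          rw [hu2, hu2]
          exact hSsm t ht j hpq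
        by_contra hge
        push_neg at hge
        have := (hφmono j).monotoneOn (hu1 _ j) (hu1 _ j) hge
        exact absurd hlt (not_lt.2 this)
    refine ⟨u, huS, ?_⟩
    funext i j
    rw [hΨφ u huS i j, hu2]
  have hcont : Continuous Ψ :=
    continuous_pi fun i => continuous_pi fun j =>
      (hψlip j).continuous.comp ((continuous_apply j).comp (continuous_apply i))
  -- the derivative of Ψ on s₁
  have hder : ∀ u ∈ s₁, HasFDerivAt Ψ (Stmt10Aux.diagCLM (cf u)) u := by
    intro u hu
    apply hasFDerivAt_pi.2
    intro i
    apply hasFDerivAt_pi.2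
    intro j
    have hdiff : DifferentiableAt ℝ (ψ j) (u i j) := (hu.2 i j).2
    have hdd : HasDerivAt (ψ j) (cf u i j) (u i j) := hdiff.hasDerivAt
    have hproj : HasFDerivAt (fun v : Fin m → Fin d → ℝ => v i j)
        (((ContinuousLinearMap.proj j : (Fin d → ℝ) →L[ℝ] ℝ)).comp
          (ContinuousLinearMap.proj i : (Fin m → Fin d → ℝ) →L[ℝ] (Fin d → ℝ))) u :=
      ((hasFDerivAt_apply (𝕜 := ℝ) j (u i)).comp u (hasFDerivAt_apply (𝕜 := ℝ) i u) :)
    exact hdd.comp_hasFDerivAt u hproj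
  have hdet : ∀ u, (Stmt10Aux.diagCLM (cf u)).det = ∏ i, ∏ j, cf u i j :=
    fun u => Stmt10Aux.det_diagCLM _
  -- non-differentiability set of x
  set N : Set (Fin d → ℝ) := {v | ¬ ∀ k, DifferentiableAt ℝ (fun s => x s k) v} with hNdef
  have hNmeas : MeasurableSet N := by
    have : N = (⋂ k, {v : Fin d → ℝ | DifferentiableAt ℝ (fun s => x s k) v})ᶜ := by
      ext v
      simp [hNdef]
    rw [this]
    exact (MeasurableSet.iInter fun k =>
      measurableSet_of_differentiableAt ℝ (fun s => x s k)).compl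
  have hNnull : volume N = 0 := by
    apply measure_mono_null (t := ⋃ k,
      {v : Fin d → ℝ | ¬ DifferentiableAt ℝ (fun s => x s k) v})
    · intro v hv
      simp only [hNdef, Set.mem_setOf_eq] at hv
      push_neg at hv
      obtain ⟨k, hk⟩ := hv
      exact Set.mem_iUnion.2 ⟨k, hk⟩
    · refine measure_iUnion_null fun k => ?_
      have := (hxk k).ae_differentiableAt (μ := volume)
      rwa [MeasureTheory.ae_iff] at this
  -- the Lusin-type argument: a.e. on the preimage of N the Jacobian vanishes
  have hTmeas : ∀ i : Fin m, MeasurableSet (s₁ ∩ Ψ ⁻¹' {t | t i ∈ N}) := by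
    intro i
    apply hs₁meas.inter
    apply hcont.measurable
    exact measurable_pi_apply i hNmeas
  have hbadi : ∀ i : Fin m, ∀ᵐ u ∂(volume),
      u ∈ s₁ ∩ Ψ ⁻¹' {t | t i ∈ N} → (∏ i', ∏ j, cf u i' j) = 0 := by
    intro i
    have hTsub : s₁ ∩ Ψ ⁻¹' {t | t i ∈ N} ⊆ s₁ := Set.inter_subset_left
    have hcov := MeasureTheory.lintegral_abs_det_fderiv_eq_addHaar_image volume (hTmeas i)
      (f := Ψ) (f' := fun u => Stmt10Aux.diagCLM (cf u))
      (fun u hu => (hder u (hTsub hu)).hasFDerivWithinAt)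
      (hinj.mono (hTsub.trans hs₁S))
    have himg : volume (Ψ '' (s₁ ∩ Ψ ⁻¹' {t | t i ∈ N})) = 0 := by
      apply measure_mono_null (t := {t : Fin m → Fin d → ℝ | t i ∈ N})
      · rintro t ⟨u, hu, rfl⟩
        exact hu.2
      · exact Stmt10Aux.eval_preimage_null hNnull i
    rw [himg] at hcov
    have hmeasF : Measurable fun u : Fin m → Fin d → ℝ =>
        ENNReal.ofReal |(Stmt10Aux.diagCLM (cf u)).det| := by
      have heqf : (fun u : Fin m → Fin d → ℝ =>
          ENNReal.ofReal |(Stmt10Aux.diagCLM (cf u)).det|)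
          = fun u => ENNReal.ofReal |∏ i', ∏ j, cf u i' j| := by
        funext u
        rw [hdet]
      rw [heqf]
      apply Measurable.ennreal_ofReal
      apply Measurable.abs
      apply Finset.measurable_prod
      intro i' _
      apply Finset.measurable_prod
      intro j _
      exact (measurable_deriv (ψ j)).comp
        ((measurable_pi_apply j).comp (measurable_pi_apply i'))
    have hae := (MeasureTheory.setLIntegral_eq_zero_iff (hTmeas i) hmeasF).1 hcov
    filter_upwards [hae] with u hu huT
    have h0 : ENNReal.ofReal |(Stmt10Aux.diagCLM (cf u)).det| = 0 := hu huT
    rw [ENNReal.ofReal_eq_zero] at h0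
    have habs : |(Stmt10Aux.diagCLM (cf u)).det| = 0 := le_antisymm h0 (abs_nonneg _)
    rw [abs_eq_zero, hdet] at habs
    exact habs
  -- the key pointwise identity, a.e. on s₁
  have hkey : ∀ᵐ u ∂(volume), u ∈ s₁ →
      gy u = |(Stmt10Aux.diagCLM (cf u)).det| • g (Ψ u) := by
    have hall := MeasureTheory.ae_all_iff.2 hbadi
    filter_upwards [hall] with u hbad hu
    have hIoo : ∀ i j, u i j ∈ Set.Ioo (0:ℝ) 1 := fun i j => (hu.2 i j).1
    have hdiffψ : ∀ i j, DifferentiableAt ℝ (ψ j) (u i j) := fun i j => (hu.2 i j).2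
    rw [smul_eq_mul, hdet]
    by_cases hz : (∏ i', ∏ j, cf u i' j) = 0
    · rw [hz, abs_zero, zero_mul]
      obtain ⟨i, _, hzi⟩ := Finset.prod_eq_zero_iff.1 hz
      obtain ⟨j, _, hzj⟩ := Finset.prod_eq_zero_iff.1 hzi
      have hψ0 : HasDerivAt (ψ j) 0 (u i j) := by
        have := (hdiffψ i j).hasDerivAt
        rwa [show deriv (ψ j) (u i j) = (0:ℝ) from hzj] at this
      exact Finset.prod_eq_zero (Finset.mem_univ i)
        (Stmt10Aux.minor_vanish hxk hψ0 (P i))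
    · have hnb : ∀ i : Fin m, Ψ u i ∉ N := by
        intro i hin
        exact hz (hbad i ⟨hu, hin⟩)
      have hdiffx : ∀ (i : Fin m) (k : Fin n),
          DifferentiableAt ℝ (fun s => x s k) (Ψ u i) := by
        intro i
        have := hnb i
        simpa [hNdef, not_not] using this
      have hch : ∀ i : Fin m, jacobianMinor y (P i) (u i)
          = (∏ j, cf u i j) * jacobianMinor x (P i) (Ψ u i) := by
        intro i
        exact Stmt10Aux.minor_chain (fun j => (hdiffψ i j).hasDerivAt) (hdiffx i) (P i)
      have hge : (0:ℝ) ≤ ∏ i', ∏ j, cf u i' j := by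
        apply Finset.prod_nonneg
        intro i' _
        apply Finset.prod_nonneg
        intro j _
        exact Stmt10Aux.deriv_nonneg_aux (fun r hr => (hψeq j hr).symm) (hφmono j)
          (hIoo i' j) (hdiffψ i' j).hasDerivAt
      calc gy u = ∏ i, ((∏ j, cf u i j) * jacobianMinor x (P i) (Ψ u i)) :=
            Finset.prod_congr rfl fun i _ => hch i
        _ = (∏ i, ∏ j, cf u i j) * ∏ i, jacobianMinor x (P i) (Ψ u i) :=
            Finset.prod_mul_distrib
        _ = |∏ i, ∏ j, cf u i j| * g (Ψ u) := by rw [abs_of_nonneg hge]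
  -- image of s₁ is almost all of S
  have himg_ae : Ψ '' s₁ =ᵐ[volume] S := by
    rw [MeasureTheory.ae_eq_set]
    constructor
    · have : Ψ '' s₁ \ S = ∅ := by
        apply Set.diff_eq_empty.2
        rintro t ⟨u, hu, rfl⟩
        exact hmaps (hs₁S hu)
      rw [this]
      exact measure_empty
    · apply measure_mono_null (t := ⋃ i, ⋃ j,
        ({t : Fin m → Fin d → ℝ | t i j = φ j 0} ∪
          {t : Fin m → Fin d → ℝ | t i j = φ j 1} ∪
          {t : Fin m → Fin d → ℝ | t i j ∈ ψ j '' {r | ¬ DifferentiableAt ℝ (ψ j) r}}))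
      · rintro t ⟨htS, htn⟩
        obtain ⟨u, huS, rfl⟩ := hsurj t htS
        have hu1 : u ∉ s₁ := fun h => htn (Set.mem_image_of_mem _ h)
        have : ¬ ∀ i j, u i j ∈ Set.Ioo (0:ℝ) 1 ∧ DifferentiableAt ℝ (ψ j) (u i j) :=
          fun h => hu1 ⟨huS, h⟩
        push_neg at this
        obtain ⟨i, j, hij⟩ := this
        refine Set.mem_iUnion.2 ⟨i, Set.mem_iUnion.2 ⟨j, ?_⟩⟩
        by_cases hIoo : u i j ∈ Set.Ioo (0:ℝ) 1
        · right
          exact ⟨u i j, hij hIoo, rfl⟩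
        · left
          have hicc := hSicc u huS i j
          rcases eq_or_lt_of_le hicc.1 with h0 | h0
          · left
            show Ψ u i j = φ j 0
            rw [show Ψ u i j = ψ j (u i j) from rfl, ← h0]
            exact (hψeq j (Set.left_mem_Icc.2 zero_le_one)).symm
          · rcases eq_or_lt_of_le hicc.2 with h1 | h1
            · right
              show Ψ u i j = φ j 1
              rw [show Ψ u i j = ψ j (u i j) from rfl, h1]
              exact (hψeq j (Set.right_mem_Icc.2 zero_le_one)).symm
            · exact absurd ⟨h0, h1⟩ hIoo
      · refine measure_iUnion_null fun i => measure_iUnion_null fun j => ?_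
        refine measure_union_null (measure_union_null ?_ ?_) ?_
        · exact Stmt10Aux.eval2_preimage_null (A := {φ j 0}) Real.volume_singleton i j
        · exact Stmt10Aux.eval2_preimage_null (A := {φ j 1}) Real.volume_singleton i j
        · exact Stmt10Aux.eval2_preimage_null
            (Stmt10Aux.lipschitz_image_null (hψlip j) (hZ j)) i j
  -- now the chain of equalities
  have e1 : msMonomial (fun s => x fun j => φ j (s j)) P π
      = ∫ u in S, ∏ i, jacobianMinor (fun s => x fun j => φ j (s j)) (P i) (u i) := rfl
  have e6 : msMonomial x P π = ∫ u in S, g u := rfl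
  rw [e1, e6]
  have step1 : (∫ u in S, ∏ i, jacobianMinor (fun s => x fun j => φ j (s j)) (P i) (u i))
      = ∫ u in S, gy u := by
    apply MeasureTheory.setIntegral_congr_ae hSmeas
    have hbdc : ∀ᵐ u ∂(volume),
        u ∉ {u : Fin m → Fin d → ℝ | ∃ i j, u i j = 0 ∨ u i j = 1} :=
      (MeasureTheory.compl_mem_ae_iff.2 hbd :)
    filter_upwards [hbdc] with u hubd huS
    have hIoo : ∀ i j, u i j ∈ Set.Ioo (0:ℝ) 1 := by
      intro i j
      have hicc := hSicc u huS i j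
      have hne : ¬ (u i j = 0 ∨ u i j = 1) := fun h => hubd ⟨i, j, h⟩
      push_neg at hne
      exact ⟨lt_of_le_of_ne hicc.1 (Ne.symm hne.1), lt_of_le_of_ne hicc.2 hne.2⟩
    apply Finset.prod_congr rfl
    intro i _
    exact Stmt10Aux.minor_congr x hψeq (fun j => hIoo i j) (P i)
  rw [step1]
  have step2 : (∫ u in S, gy u) = ∫ u in s₁, gy u :=
    (MeasureTheory.setIntegral_congr_set hs₁ae).symm
  rw [step2]
  have step3 : (∫ u in s₁, gy u)
      = ∫ u in s₁, |(Stmt10Aux.diagCLM (cf u)).det| • g (Ψ u) :=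
    MeasureTheory.setIntegral_congr_ae hs₁meas hkey
  rw [step3]
  have step4 : (∫ u in s₁, |(Stmt10Aux.diagCLM (cf u)).det| • g (Ψ u))
      = ∫ t in Ψ '' s₁, g t :=
    (MeasureTheory.integral_image_eq_integral_abs_det_fderiv_smul volume hs₁meas
      (fun u hu => (hder u hu).hasFDerivWithinAt) (hinj.mono hs₁S) g).symm
  rw [step4]
  exact MeasureTheory.setIntegral_congr_set himg_ae

end
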